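/- Let H be a symmetric n×n real matrix with smallest eigenvalue Λ attained at unit eigenvector V = e_m (in an eigenbasis of H with eigenvalues λ_k), and let R be a curvature-type array with R_{mkmk} ≥ 0 for all k. Then the quantity (R_{ik}H_{jk} + R_{jk}H_{ik} − 2R_{ikjl}H_{kl})V^iV^j = 2Σ_k R_{mkmk}(Λ − λ_k) ≤ 0, where R_{ij} = Σ_k R_{ikjk}. -/
import Mathlib


noncomputable section

/-- Let `H` be diagonal in an orthonormal eigenbasis with eigenvalues `λ_k`, smallest
eigenvalue `Λ = λ_m` attained at `V = e_m`, and let `R` be a curvature-type array with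
`R_{mkmk} ≥ 0`.  Then
`(R_{ik}H_{jk} + R_{jk}H_{ik} − 2R_{ikjl}H_{kl}) V^i V^j = 2 Σ_k R_{mkmk}(Λ − λ_k) ≤ 0`,
where `R_{ij} = Σ_k R_{ikjk}`. -/
theorem stmt7 (n : ℕ) (R : Fin n → Fin n → Fin n → Fin n → ℝ)
    (hanti1 : ∀ i j k l, R i j k l = - R j i k l)
    (hanti2 : ∀ i j k l, R i j k l = - R i j l k)
    (hpair : ∀ i j k l, R i j k l = R k l i j)
    (lam : Fin n → ℝ) (m : Fin n) (hmin : ∀ k, lam m ≤ lam k)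
    (H : Matrix (Fin n) (Fin n) ℝ) (hH : H = Matrix.diagonal lam)
    (hsec : ∀ k, 0 ≤ R m k m k)
    (V : Fin n → ℝ) (hV : V = fun i => if i = m then 1 else 0) :
    (∑ i, ∑ j, ((∑ k, (∑ l, R i l k l) * H j k) + (∑ k, (∑ l, R j l k l) * H i k)
        - 2 * ∑ k, ∑ l, R i k j l * H k l) * V i * V j)
      = 2 * ∑ k, R m k m k * (lam m - lam k) ∧
    2 * ∑ k, R m k m k * (lam m - lam k) ≤ 0 := by
  subst hH hV
  constructor
  · simp only [mul_ite, mul_one, mul_zero, Finset.sum_ite_eq', Finset.mem_univ, if_true,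
      Matrix.diagonal_apply]
    simp only [Finset.sum_ite_eq, Finset.mem_univ, if_true, mul_sub, Finset.sum_sub_distrib,
      Finset.mul_sum, Finset.sum_mul]
    have h : ∀ x : Fin n, 2 * (R m x m x * lam m) = R m x m x * lam m + R m x m x * lam m :=
      fun x => by ring
    simp only [h, Finset.sum_add_distrib]
  · have h1 : ∀ k : Fin n, R m k m k * (lam m - lam k) ≤ 0 := fun k =>
      mul_nonpos_of_nonneg_of_nonpos (hsec k) (sub_nonpos.2 (hmin k))
    have h2 := Finset.sum_nonpos (fun k (_ : k ∈ Finset.univ) => h1 k)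
    linarith
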